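/- The function g(x) = x^{-2} · ln(1/(1−x)) is convex on the open interval (0, 1). -/

import Mathlib

open Set Real

noncomputable def gg (x : ℝ) : ℝ := -Real.log (1 - x) / x ^ 2
noncomputable def gg' (x : ℝ) : ℝ := 1 / ((1 - x) * x ^ 2) + 2 * Real.log (1 - x) / x ^ 3
noncomputable def gg'' (x : ℝ) : ℝ :=
  1 / ((1 - x) ^ 2 * x ^ 2) - 4 / ((1 - x) * x ^ 3) - 6 * Real.log (1 - x) / x ^ 4

lemma hlog (x : ℝ) (hx : x ∈ Set.Ico (0:ℝ) 1) :
    x + x ^ 2 / 2 + x ^ 3 / 3 ≤ -Real.log (1 - x) := by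
  set F : ℝ → ℝ := fun x => -Real.log (1 - x) - (x + x ^ 2 / 2 + x ^ 3 / 3) with hF
  have hder : ∀ y ∈ Set.Ioo (0:ℝ) 1, HasDerivAt F (1 / (1 - y) - (1 + y + y ^ 2)) y := by
    intro y hy
    have h1 : (1 : ℝ) - y ≠ 0 := by nlinarith [hy.2]
    have hlog : HasDerivAt (fun z : ℝ => Real.log (1 - z)) (-1 / (1 - y)) y := by
      have := ((hasDerivAt_const y (1:ℝ)).sub (hasDerivAt_id y)).log h1
      simpa using this
    have hpoly : HasDerivAt (fun z : ℝ => z + z ^ 2 / 2 + z ^ 3 / 3)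
        (1 + y + y ^ 2) y := by
      have := ((hasDerivAt_id y).add (((hasDerivAt_pow 2 y)).div_const 2)).add
        (((hasDerivAt_pow 3 y)).div_const 3)
      refine this.congr_deriv ?_
      ring
    have := (hlog.neg).sub hpoly
    refine this.congr_deriv ?_
    field_simp
  have hmono : MonotoneOn F (Set.Ico (0:ℝ) 1) := by
    apply monotoneOn_of_deriv_nonneg (convex_Ico 0 1)
    · -- ContinuousOn
      intro y hy
      have h1 : (1 : ℝ) - y ≠ 0 := by
        have := hy.2; simp at this ⊢; nlinarith
      apply ContinuousAt.continuousWithinAt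
      have : ContinuousAt (fun z : ℝ => Real.log (1 - z)) y :=
        (Real.continuousAt_log (by simpa using h1)).comp (by fun_prop)
      fun_prop
    · rw [interior_Ico]
      intro y hy
      exact (hder y hy).differentiableAt.differentiableWithinAt
    · rw [interior_Ico]
      intro y hy
      rw [(hder y hy).deriv]
      have h1 : (0:ℝ) < 1 - y := by linarith [hy.2]
      rw [sub_nonneg, ← sub_nonneg]
      have : 1 / (1 - y) - (1 + y + y ^ 2) = y ^ 3 / (1 - y) := by
        field_simp; ring
      rw [this]
      exact div_nonneg (pow_nonneg hy.1.le 3) h1.le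
  have h0 : F 0 ≤ F x := hmono (by constructor <;> norm_num) hx hx.1
  simp [hF] at h0
  linarith

lemma hd1 : ∀ x ∈ Set.Ioo (0:ℝ) 1, HasDerivAt gg (gg' x) x := by
  intro x hx
  have hx0 : x ≠ 0 := ne_of_gt hx.1
  have h1 : (1:ℝ) - x ≠ 0 := by have := hx.2; intro h; nlinarith
  have hlog : HasDerivAt (fun z : ℝ => -Real.log (1 - z)) (1 / (1 - x)) x := by
    have := (((hasDerivAt_const x (1:ℝ)).sub (hasDerivAt_id x)).log h1).neg
    refine this.congr_deriv ?_
    simp only [Pi.sub_apply, id_eq]; field_simp; ring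
  have hpow : HasDerivAt (fun z : ℝ => z ^ 2) (2 * x) x := by
    simpa using hasDerivAt_pow 2 x
  have hx2 : x ^ 2 ≠ 0 := pow_ne_zero 2 hx0
  have := hlog.div hpow hx2
  refine this.congr_deriv ?_
  unfold gg'
  field_simp
  ring

lemma hd2 : ∀ x ∈ Set.Ioo (0:ℝ) 1, HasDerivAt gg' (gg'' x) x := by
  intro x hx
  have hx0 : x ≠ 0 := ne_of_gt hx.1
  have h1 : (1:ℝ) - x ≠ 0 := by have := hx.2; intro h; nlinarith
  have ha : HasDerivAt (fun z : ℝ => 1 / ((1 - z) * z ^ 2))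
      (-( -1 * x ^ 2 + (1 - x) * (2 * x)) / ((1 - x) * x ^ 2) ^ 2) x := by
    have hden : HasDerivAt (fun z : ℝ => (1 - z) * z ^ 2)
        (-1 * x ^ 2 + (1 - x) * (2 * x)) x := by
      have := ((hasDerivAt_const x (1:ℝ)).sub (hasDerivAt_id x)).mul
        (by simpa using hasDerivAt_pow 2 x : HasDerivAt (fun z : ℝ => z ^ 2) (2 * x) x)
      refine this.congr_deriv ?_
      simp only [Pi.sub_apply, id_eq]
      ring
    have hne : (1 - x) * x ^ 2 ≠ 0 := mul_ne_zero h1 (pow_ne_zero 2 hx0)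
    have := (hasDerivAt_const x (1:ℝ)).div hden hne
    refine this.congr_deriv ?_
    field_simp; ring
  have hb : HasDerivAt (fun z : ℝ => 2 * Real.log (1 - z) / z ^ 3)
      ((2 * (-1 / (1 - x)) * x ^ 3 - 2 * Real.log (1 - x) * (3 * x ^ 2)) / (x ^ 3) ^ 2) x := by
    have hlog2 : HasDerivAt (fun z : ℝ => 2 * Real.log (1 - z)) (2 * (-1 / (1 - x))) x := by
      have := (((hasDerivAt_const x (1:ℝ)).sub (hasDerivAt_id x)).log h1).const_mul 2
      refine this.congr_deriv ?_
      simp only [Pi.sub_apply, id_eq]; field_simp; ring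
    have hpow3 : HasDerivAt (fun z : ℝ => z ^ 3) (3 * x ^ 2) x := by
      simpa using hasDerivAt_pow 3 x
    exact hlog2.div hpow3 (pow_ne_zero 3 hx0)
  have := ha.add hb
  refine this.congr_deriv ?_
  unfold gg''
  field_simp
  ring

theorem g_convex :
    ConvexOn ℝ (Set.Ioo (0 : ℝ) 1)
      (fun x : ℝ => Real.log (1 / (1 - x)) / x ^ 2) := by
  have hfun : (fun x : ℝ => Real.log (1 / (1 - x)) / x ^ 2) = gg := by
    funext x
    unfold gg
    rw [one_div, Real.log_inv]
  rw [hfun]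
  have hopen : IsOpen (Set.Ioo (0:ℝ) 1) := isOpen_Ioo
  have hdd : ∀ x ∈ Set.Ioo (0:ℝ) 1, deriv gg x = gg' x := fun x hx => (hd1 x hx).deriv
  apply convexOn_of_deriv2_nonneg (convex_Ioo 0 1)
  · intro x hx
    exact (hd1 x hx).differentiableAt.continuousAt.continuousWithinAt
  · rw [interior_Ioo]
    intro x hx
    exact (hd1 x hx).differentiableAt.differentiableWithinAt
  · rw [interior_Ioo]
    intro x hx
    have hev : deriv gg =ᶠ[nhds x] gg' :=
      Filter.eventually_of_mem (hopen.mem_nhds hx) hdd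
    exact ((hd2 x hx).differentiableAt.congr_of_eventuallyEq hev).differentiableWithinAt
  · rw [interior_Ioo]
    intro x hx
    have hev : deriv gg =ᶠ[nhds x] gg' :=
      Filter.eventually_of_mem (hopen.mem_nhds hx) hdd
    simp only [Function.iterate_succ, Function.iterate_zero, Function.comp_apply, id]
    rw [hev.deriv_eq, (hd2 x hx).deriv]
    -- now show 0 ≤ gg'' x
    have hx0 : (0:ℝ) < x := hx.1
    have h1 : (0:ℝ) < 1 - x := by linarith [hx.2]
    have hL := hlog x ⟨le_of_lt hx.1, hx.2⟩
    set L := -Real.log (1 - x) with hLdef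
    have key : 0 ≤ x ^ 2 - 4 * x * (1 - x) + 6 * L * (1 - x) ^ 2 := by
      have hstep : 6 * (x + x ^ 2 / 2 + x ^ 3 / 3) * (1 - x) ^ 2 ≤ 6 * L * (1 - x) ^ 2 := by
        have := mul_le_mul_of_nonneg_right hL (sq_nonneg (1 - x))
        nlinarith [sq_nonneg (1-x)]
      nlinarith [sq_nonneg (1 - x), sq_nonneg x, mul_pos hx0 h1, sq_nonneg (x^2 - x),
        mul_pos (mul_pos hx0 hx0) hx0, sq_nonneg (x - 1/2)]
    have heq : gg'' x = (x ^ 2 - 4 * x * (1 - x) + 6 * L * (1 - x) ^ 2) / ((1 - x) ^ 2 * x ^ 4) := by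
      unfold gg''
      rw [hLdef]
      field_simp
      ring
    rw [heq]
    positivity
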